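/- Let σ_m(n) ∈ (0,1) denote the unique root in (0,1) of the equation z = α_n(mμ_n − mμ_n z), and let α_n'(s) = −∫_0^∞ x e^{−sx} dA_n(x) denote the derivative of α_n. Then 1 + mμ_n α_n'(mμ_n − mμ_n σ_m(n)) = ε_n + o(ε_n) as n → ∞; that is, (1 + mμ_n α_n'(mμ_n − mμ_n σ_m(n)))/ε_n → 1. -/

import Mathlib

open MeasureTheory Filter Topology

/-- Relation (7.2): in the heavy-traffic regime, with `σ_m(n)` the root in `(0,1)` of
`z = α_n(mμ_n - mμ_n z)`, one has `1 + mμ_n α_n'(mμ_n - mμ_n σ_m(n)) = ε_n + o(ε_n)`. -/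

lemma aux1 (u : ℝ) : 1 - u ≤ Real.exp (-u) := by
  have := Real.add_one_le_exp (-u); linarith

lemma aux2 (u : ℝ) (hu : 0 ≤ u) : Real.exp (-u) ≤ 1 - u + u^2/2 := by
  have hd : ∀ t : ℝ, HasDerivAt (fun t => 1 - t + t^2/2 - Real.exp (-t))
      (-1 + t + Real.exp (-t)) t := by
    intro t
    have h1 : HasDerivAt (fun t : ℝ => Real.exp (-t)) (-Real.exp (-t)) t := by
      simpa [Function.comp_def] using (Real.hasDerivAt_exp (-t)).comp t ((hasDerivAt_id t).neg)
    have hpow : HasDerivAt (fun t : ℝ => t^2/2) t t := by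
      simpa using (hasDerivAt_pow 2 t).div_const 2
    have h2 : HasDerivAt (fun t : ℝ => 1 - t) (-1) t := by
      simpa using ((hasDerivAt_id t).const_sub (1:ℝ))
    have := ((h2.add hpow).sub h1)
    refine this.congr_deriv ?_
    ring
  have hmono : Monotone (fun t => 1 - t + t^2/2 - Real.exp (-t)) := by
    apply monotone_of_deriv_nonneg
    · exact fun t => (hd t).differentiableAt
    · intro t
      rw [(hd t).deriv]
      have := aux1 t
      linarith
  have h0 := hmono hu
  simp [Real.exp_zero] at h0
  linarith

lemma aux3 (u : ℝ) (hu : 0 ≤ u) : 1 - u + u^2/2 - u^3/6 ≤ Real.exp (-u) := by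
  have hd : ∀ t : ℝ, HasDerivAt (fun t => Real.exp (-t) - (1 - t + t^2/2 - t^3/6))
      (-Real.exp (-t) + 1 - t + t^2/2) t := by
    intro t
    have h1 : HasDerivAt (fun t : ℝ => Real.exp (-t)) (-Real.exp (-t)) t := by
      simpa [Function.comp_def] using (Real.hasDerivAt_exp (-t)).comp t ((hasDerivAt_id t).neg)
    have hpow : HasDerivAt (fun t : ℝ => t^2/2) t t := by
      simpa using (hasDerivAt_pow 2 t).div_const 2
    have hpow3 : HasDerivAt (fun t : ℝ => t^3/6) (t^2/2) t := by
      have := (hasDerivAt_pow 3 t).div_const 6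
      refine this.congr_deriv ?_
      ring
    have h2 : HasDerivAt (fun t : ℝ => 1 - t) (-1) t := by
      simpa using ((hasDerivAt_id t).const_sub (1:ℝ))
    have := h1.sub ((h2.add hpow).sub hpow3)
    refine this.congr_deriv ?_
    ring
  have hmono : MonotoneOn (fun t => Real.exp (-t) - (1 - t + t^2/2 - t^3/6)) (Set.Ici 0) := by
    apply monotoneOn_of_deriv_nonneg (convex_Ici 0)
    · exact Continuous.continuousOn (by continuity)
    · exact fun t _ => (hd t).differentiableAt.differentiableWithinAt
    · intro t ht
      rw [interior_Ici] at ht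
      rw [(hd t).deriv]
      have := aux2 t ht.le
      linarith
  have h0 := hmono (Set.self_mem_Ici) hu hu
  simp [Real.exp_zero] at h0
  linarith

lemma intPble (A : Measure ℝ) [IsProbabilityMeasure A]
    (h1 : Integrable (fun x => x) A) (h2 : Integrable (fun x => x ^ 2) A)
    (h3 : Integrable (fun x => x ^ 3) A) (a b c d : ℝ) :
    Integrable (fun x => a + b*x + c*x^2 + d*x^3) A :=
  (((integrable_const a).add (h1.const_mul b)).add (h2.const_mul c)).add (h3.const_mul d)

lemma intP (A : Measure ℝ) [IsProbabilityMeasure A]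
    (h1 : Integrable (fun x => x) A) (h2 : Integrable (fun x => x ^ 2) A)
    (h3 : Integrable (fun x => x ^ 3) A) (a b c d : ℝ) :
    ∫ x, (a + b*x + c*x^2 + d*x^3) ∂A
      = a + b*(∫ x, x ∂A) + c*(∫ x, x^2 ∂A) + d*(∫ x, x^3 ∂A) := by
  have e3 : ∫ x, (a + b*x + c*x^2 + d*x^3) ∂A
      = (∫ x, (a + b*x + c*x^2) ∂A) + ∫ x, d*x^3 ∂A :=
    integral_add (((integrable_const a).add (h1.const_mul b)).add (h2.const_mul c))
      (h3.const_mul d)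
  have e2 : ∫ x, (a + b*x + c*x^2) ∂A = (∫ x, (a + b*x) ∂A) + ∫ x, c*x^2 ∂A :=
    integral_add ((integrable_const a).add (h1.const_mul b)) (h2.const_mul c)
  have e1 : ∫ x, (a + b*x) ∂A = (∫ x, (a:ℝ) ∂A) + ∫ x, b*x ∂A :=
    integral_add (integrable_const a) (h1.const_mul b)
  rw [e3, e2, e1, integral_const, integral_const_mul, integral_const_mul, integral_const_mul]
  simp

set_option maxHeartbeats 1000000 in
lemma key (A : Measure ℝ) [IsProbabilityMeasure A] (β ε σ B' : ℝ)
    (hβ : 0 < β) (hεp : 0 < ε) (hε2 : ε ≤ 1/2) (hσ : σ ∈ Set.Ioo (0:ℝ) 1)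
    (hae : ∀ᵐ x ∂A, 0 ≤ x)
    (h1 : Integrable (fun x => x) A) (h2 : Integrable (fun x => x ^ 2) A)
    (h3 : Integrable (fun x => x ^ 3) A)
    (hm : (∫ x, x ∂A)⁻¹ / β = 1 - ε)
    (hroot : ∫ x, Real.exp (-((β - β*σ)*x)) ∂A = σ)
    (hB : ∫ x, (β*x)^3 ∂A ≤ B') (hB0 : 0 ≤ B') :
    ε - 72*ε^2*B' ≤ 1 + β * (-(∫ x, x * Real.exp (-((β - β*σ)*x)) ∂A)) ∧
    1 + β * (-(∫ x, x * Real.exp (-((β - β*σ)*x)) ∂A)) ≤ ε*(1-ε)⁻¹ + 48*ε^2*B' := by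
  have hσ1 : σ < 1 := hσ.2
  have hσ0 : 0 < σ := hσ.1
  -- introduce s as an opaque variable
  obtain ⟨s, hsdef⟩ : ∃ t : ℝ, t = β - β*σ := ⟨_, rfl⟩
  rw [← hsdef] at hroot ⊢
  have hspos : 0 < s := by
    have h := mul_pos hβ (show (0:ℝ) < 1 - σ by linarith)
    rw [hsdef]; linarith [h]
  have h1ε : 0 < 1 - ε := by linarith
  -- simple moment facts (still with explicit integrals)
  have hρ3B : β^3*(∫ x, x^3 ∂A) ≤ B' := by
    have hfe : (fun x => (β*x)^3) = fun x => β^3*x^3 := funext fun x => by ring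
    rw [hfe, integral_const_mul] at hB
    exact hB
  have hM2 : 0 ≤ ∫ x, x^2 ∂A :=
    integral_nonneg_of_ae (by filter_upwards [hae] with x hx; positivity)
  have hM3 : 0 ≤ ∫ x, x^3 ∂A :=
    integral_nonneg_of_ae (by filter_upwards [hae] with x hx; positivity)
  have hM1nn : 0 ≤ ∫ x, x ∂A :=
    integral_nonneg_of_ae (by filter_upwards [hae] with x hx; exact hx)
  -- integrability of exp integrands
  have hcont : Continuous fun x : ℝ => Real.exp (-(s*x)) :=
    Real.continuous_exp.comp ((continuous_const.mul continuous_id).neg)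
  have hcont2 : Continuous fun x : ℝ => x * Real.exp (-(s*x)) :=
    continuous_id.mul hcont
  have hexp_le : ∀ x : ℝ, 0 ≤ x → Real.exp (-(s*x)) ≤ 1 := by
    intro x hx
    calc Real.exp (-(s*x)) ≤ Real.exp 0 :=
          Real.exp_le_exp.mpr (by linarith [mul_nonneg hspos.le hx])
      _ = 1 := Real.exp_zero
  have hIexp : Integrable (fun x => Real.exp (-(s*x))) A := by
    apply Integrable.mono' (integrable_const (1:ℝ)) hcont.aestronglyMeasurable
    filter_upwards [hae] with x hx
    rw [Real.norm_eq_abs, abs_of_pos (Real.exp_pos _)]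
    exact hexp_le x hx
  have hIxexp : Integrable (fun x => x * Real.exp (-(s*x))) A := by
    apply Integrable.mono' h1.abs hcont2.aestronglyMeasurable
    filter_upwards [hae] with x hx
    rw [Real.norm_eq_abs, abs_mul, abs_of_pos (Real.exp_pos _)]
    have := mul_le_mul_of_nonneg_left (hexp_le x hx) (abs_nonneg x)
    simpa using this
  -- Jensen-type lower bound
  have hJen : Real.exp (-(s*(∫ x, x ∂A))) ≤ σ := by
    obtain ⟨C, hCdef⟩ : ∃ c : ℝ, c = Real.exp (-(s*(∫ x, x ∂A))) := ⟨_, rfl⟩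
    rw [← hCdef]
    have hCpos : 0 < C := by rw [hCdef]; exact Real.exp_pos _
    have hpt : ∀ᵐ x ∂A, (C*(1+s*(∫ x, x ∂A))) + (-(C*s))*x + 0*x^2 + 0*x^3
        ≤ Real.exp (-(s*x)) := by
      filter_upwards with x
      have h := Real.add_one_le_exp (s*(∫ x, x ∂A) - s*x)
      have hmul := mul_le_mul_of_nonneg_left h hCpos.le
      have hee : C * Real.exp (s*(∫ x, x ∂A) - s*x) = Real.exp (-(s*x)) := by
        rw [hCdef, ← Real.exp_add]
        congr 1
        ring
      calc (C*(1+s*(∫ x, x ∂A))) + (-(C*s))*x + 0*x^2 + 0*x^3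
          = C * (s*(∫ x, x ∂A) - s*x + 1) := by ring
        _ ≤ C * Real.exp (s*(∫ x, x ∂A) - s*x) := hmul
        _ = Real.exp (-(s*x)) := hee
    have hint := integral_mono_ae (intPble A h1 h2 h3 _ _ _ _) hIexp hpt
    rw [intP A h1 h2 h3, hroot] at hint
    have hid : (C*(1+s*(∫ x, x ∂A))) + (-(C*s))*(∫ x, x ∂A)
        + 0*(∫ x, x^2 ∂A) + 0*(∫ x, x^3 ∂A) = C := by ring
    linarith
  -- (U) and (L)
  have hptU : ∀ᵐ x ∂A, Real.exp (-(s*x)) ≤ 1 + (-s)*x + (s^2/2)*x^2 + 0*x^3 := by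
    filter_upwards [hae] with x hx
    have h := aux2 (s*x) (mul_nonneg hspos.le hx)
    calc Real.exp (-(s*x)) ≤ 1 - s*x + (s*x)^2/2 := h
      _ = 1 + (-s)*x + (s^2/2)*x^2 + 0*x^3 := by ring
  have hU := integral_mono_ae hIexp (intPble A h1 h2 h3 _ _ _ _) hptU
  rw [intP A h1 h2 h3, hroot] at hU
  have hptL : ∀ᵐ x ∂A, 1 + (-s)*x + (s^2/2)*x^2 + (-(s^3/6))*x^3 ≤ Real.exp (-(s*x)) := by
    filter_upwards [hae] with x hx
    have h := aux3 (s*x) (mul_nonneg hspos.le hx)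
    calc (1:ℝ) + (-s)*x + (s^2/2)*x^2 + (-(s^3/6))*x^3
        = 1 - s*x + (s*x)^2/2 - (s*x)^3/6 := by ring
      _ ≤ Real.exp (-(s*x)) := h
  have hL := integral_mono_ae (intPble A h1 h2 h3 _ _ _ _) hIexp hptL
  rw [intP A h1 h2 h3, hroot] at hL
  -- (Jl) and (Ju)
  have hptJl : ∀ᵐ x ∂A, 0 + 1*x + (-s)*x^2 + 0*x^3 ≤ x * Real.exp (-(s*x)) := by
    filter_upwards [hae] with x hx
    have h := aux1 (s*x)
    linarith [mul_le_mul_of_nonneg_left h hx]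
  have hJl := integral_mono_ae (intPble A h1 h2 h3 _ _ _ _) hIxexp hptJl
  rw [intP A h1 h2 h3] at hJl
  have hptJu : ∀ᵐ x ∂A, x * Real.exp (-(s*x)) ≤ 0 + 1*x + (-s)*x^2 + (s^2/2)*x^3 := by
    filter_upwards [hae] with x hx
    have h := aux2 (s*x) (mul_nonneg hspos.le hx)
    linarith [mul_le_mul_of_nonneg_left h hx]
  have hJu := integral_mono_ae hIxexp (intPble A h1 h2 h3 _ _ _ _) hptJu
  rw [intP A h1 h2 h3] at hJu
  -- now make everything opaque
  clear hB hptU hptL hptJl hptJu hcont hcont2 hIexp hIxexp hroot hexp_le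
  obtain ⟨M1, hM1def⟩ : ∃ v : ℝ, (∫ x, x ∂A) = v := ⟨_, rfl⟩
  obtain ⟨M2, hM2def⟩ : ∃ v : ℝ, (∫ x, x^2 ∂A) = v := ⟨_, rfl⟩
  obtain ⟨M3, hM3def⟩ : ∃ v : ℝ, (∫ x, x^3 ∂A) = v := ⟨_, rfl⟩
  obtain ⟨Jx, hJxdef⟩ : ∃ v : ℝ, (∫ x, x * Real.exp (-(s*x)) ∂A) = v := ⟨_, rfl⟩
  rw [hM1def] at hm hU hL hJl hJu hJen hM1nn
  rw [hM2def] at hU hL hJl hJu hM2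
  rw [hM3def] at hU hL hJl hJu hM3 hρ3B
  rw [hJxdef] at hJl hJu ⊢
  obtain ⟨δ, hδdef⟩ : ∃ d : ℝ, d = 1 - σ := ⟨_, rfl⟩
  have hδpos : 0 < δ := by rw [hδdef]; linarith
  have hδlt : δ < 1 := by rw [hδdef]; linarith
  have hσδ : σ = 1 - δ := by rw [hδdef]; ring
  have hsδ : s = β*δ := by rw [hsdef, hδdef]; ring
  -- moment relations
  have hMinv : M1⁻¹ = (1-ε)*β := by
    rw [div_eq_iff hβ.ne'] at hm; rw [hm]
  have hM1pos : 0 < M1 := by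
    have : 0 < M1⁻¹ := by rw [hMinv]; positivity
    exact inv_pos.mp this
  have hβM1pos : 0 < β*M1 := mul_pos hβ hM1pos
  have hprod : (1-ε)*(β*M1) = 1 := by
    calc (1-ε)*(β*M1) = ((1-ε)*β)*M1 := by ring
      _ = M1⁻¹ * M1 := by rw [hMinv]
      _ = 1 := inv_mul_cancel₀ hM1pos.ne'
  have hd1 : β*M1 - 1 = ε*(β*M1) := by linarith [hprod]
  have hβM1_ge : 1 ≤ β*M1 := by linarith [hprod, mul_pos hεp hβM1pos]
  have hρ3nn : 0 ≤ β^3*M3 := by positivity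
  -- Step 1 : δ ≤ 12 ε
  have hu0 : 0 ≤ s*M1 := by positivity
  have huδ : (1-ε)*(s*M1) = δ := by
    rw [hsδ]
    calc (1-ε)*(β*δ*M1) = δ*((1-ε)*(β*M1)) := by ring
      _ = δ := by rw [hprod]; ring
  have hεsM1 : 0 ≤ ε*(s*M1) := by positivity
  have hu_ge : δ ≤ s*M1 := by linarith [huδ, hεsM1]
  have hu_le : s*M1 ≤ 2*δ := by linarith [huδ, mul_le_mul_of_nonneg_right hε2 hu0]
  have hstep1 : 1 - s*M1 + (s*M1)^2/2 - (s*M1)^3/6 ≤ 1 - δ := by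
    have h := aux3 (s*M1) hu0
    rw [hσδ] at hJen
    linarith
  have hδε : δ ≤ 12*ε := by
    have hu2 : s*M1 ≤ 2 := by linarith
    have hcube : (s*M1)^3 ≤ 2*(s*M1)^2 := by
      linarith [mul_nonneg (show (0:ℝ) ≤ 2 - s*M1 by linarith) (sq_nonneg (s*M1))]
    have h6 : δ^2/6 ≤ s*M1 - δ := by
      linarith [hstep1, hcube, pow_le_pow_left₀ hδpos.le hu_ge 2]
    have hεu : s*M1 - δ = ε*(s*M1) := by linarith [huδ]
    have h12 : ε*(s*M1) ≤ ε*(2*δ) := mul_le_mul_of_nonneg_left hu_le hεp.le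
    have := (mul_le_mul_iff_right₀ hδpos).mp
      (show δ*δ ≤ δ*(12*ε) by linarith [h6, hεu, h12])
    linarith
  -- substitution equalities
  rw [hσδ] at hU hL
  have hsM1 : s*M1 = δ*(β*M1) := by rw [hsδ]; ring
  have hs2M2 : s^2*M2 = δ^2*(β^2*M2) := by rw [hsδ]; ring
  have hs3M3 : s^3*M3 = δ^3*(β^3*M3) := by rw [hsδ]; ring
  have hsM2β : β*(s*M2) = δ*(β^2*M2) := by rw [hsδ]; ring
  have hs2M3β : β*(s^2*M3) = δ^2*(β^3*M3) := by rw [hsδ]; ring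
  have hd1δ : δ*(β*M1 - 1) = δ*(ε*(β*M1)) := by rw [hd1]
  -- K1 : 2 ε (βM1) ≤ δ (β²M2)
  have hK1 : 2*(ε*(β*M1)) ≤ δ*(β^2*M2) := by
    have hdiv := (mul_le_mul_iff_right₀ hδpos).mp
      (show δ*(ε*(β*M1)) ≤ δ*(δ*(β^2*M2)/2) by linarith [hU, hsM1, hs2M2, hd1δ])
    linarith
  -- K2 : δ (β²M2) ≤ 2 ε (βM1) + δ² (β³M3)/3
  have hK2 : δ*(β^2*M2) ≤ 2*(ε*(β*M1)) + δ^2*(β^3*M3)/3 := by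
    have hdiv := (mul_le_mul_iff_right₀ hδpos).mp
      (show δ*(δ*(β^2*M2)/2) ≤ δ*(ε*(β*M1) + δ^2*(β^3*M3)/6) by
        linarith [hL, hsM1, hs2M2, hs3M3, hd1δ])
    linarith
  -- bounds on β * Jx
  have hβJl : β*M1 - δ*(β^2*M2) ≤ β*Jx := by
    linarith [mul_le_mul_of_nonneg_left hJl hβ.le, hsM2β]
  have hβJu : β*Jx ≤ β*M1 - δ*(β^2*M2) + δ^2*(β^3*M3)/2 := by
    linarith [mul_le_mul_of_nonneg_left hJu hβ.le, hsM2β, hs2M3β]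
  -- δ² (β³M3) ≤ 144 ε² B'
  have hd2 : δ^2*(β^3*M3) ≤ 144*ε^2*B' := by
    have hδ2 : δ^2 ≤ 144*ε^2 := by linarith [pow_le_pow_left₀ hδpos.le hδε 2]
    have t1 := mul_le_mul_of_nonneg_right hδ2 hρ3nn
    have t2 := mul_le_mul_of_nonneg_left hρ3B (show (0:ℝ) ≤ 144*ε^2 by positivity)
    linarith
  have hεβM1 : ε*(β*M1) = ε*(1-ε)⁻¹ := by
    have : β*M1 = (1-ε)⁻¹ := eq_inv_of_mul_eq_one_right hprod
    rw [this]
  have hεb : ε*1 ≤ ε*(β*M1) := mul_le_mul_of_nonneg_left hβM1_ge hεp.le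
  constructor
  · linarith [hβJu, hK1, hd1, hd2, hεb]
  · linarith [hβJl, hK2, hd1, hd2, hεβM1]

theorem derivative_term_asymptotics
    (m : ℕ) (hm : 1 ≤ m)
    (A : ℕ → Measure ℝ) [∀ n, IsProbabilityMeasure (A n)]
    (μ : ℕ → ℝ) (hμ : ∀ n, 0 < μ n)
    (hsupp : ∀ n, A n {x | x < 0} = 0)
    (hint1 : ∀ n, Integrable (fun x => x) (A n))
    (hint2 : ∀ n, Integrable (fun x => x ^ 2) (A n))
    (hint3 : ∀ n, Integrable (fun x => x ^ 3) (A n))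
    (ε : ℕ → ℝ) (hε : ∀ n, 0 < ε n) (hε0 : Tendsto ε atTop (𝓝 0))
    (hϱ : ∀ n, (∫ x, x ∂(A n))⁻¹ / (m * μ n) = 1 - ε n)
    (hϱ3 : ∃ B : ℝ, ∀ n, ∫ x, (m * μ n * x) ^ 3 ∂(A n) ≤ B)
    (ρ2 : ℝ) (hϱ2 : Tendsto (fun n => ∫ x, (m * μ n * x) ^ 2 ∂(A n)) atTop (𝓝 ρ2))
    (σ : ℕ → ℝ) (hσ : ∀ n, σ n ∈ Set.Ioo (0 : ℝ) 1)
    (hroot : ∀ n, ∫ x, Real.exp (-((m * μ n - m * μ n * σ n) * x)) ∂(A n) = σ n) :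
    Tendsto
      (fun n =>
        (1 + m * μ n * (-(∫ x, x * Real.exp (-((m * μ n - m * μ n * σ n) * x)) ∂(A n))))
          / ε n)
      atTop (𝓝 1) := by
  obtain ⟨B, hB⟩ := hϱ3
  set B' := max B 0 with hB'def
  have hB'0 : 0 ≤ B' := le_max_right _ _
  have hB' : ∀ n, ∫ x, ((m:ℝ) * μ n * x) ^ 3 ∂(A n) ≤ B' := fun n =>
    (hB n).trans (le_max_left _ _)
  have hβ : ∀ n, 0 < (m:ℝ) * μ n := fun n =>
    mul_pos (by exact_mod_cast Nat.lt_of_lt_of_le Nat.zero_lt_one hm) (hμ n)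
  have hae : ∀ n, ∀ᵐ x ∂(A n), 0 ≤ x := by
    intro n
    rw [MeasureTheory.ae_iff]
    simpa [not_le] using hsupp n
  have hev : ∀ᶠ n in atTop, ε n ≤ 1/2 :=
    (hε0.eventually (gt_mem_nhds (by norm_num : (0:ℝ) < 1/2))).mono fun n h => h.le
  -- the two bounds from `key`
  have hkey : ∀ᶠ n in atTop,
      ε n - 72*(ε n)^2*B' ≤ 1 + (m:ℝ) * μ n *
        (-(∫ x, x * Real.exp (-(((m:ℝ) * μ n - (m:ℝ) * μ n * σ n) * x)) ∂(A n))) ∧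
      1 + (m:ℝ) * μ n *
        (-(∫ x, x * Real.exp (-(((m:ℝ) * μ n - (m:ℝ) * μ n * σ n) * x)) ∂(A n)))
        ≤ (ε n)*(1 - ε n)⁻¹ + 48*(ε n)^2*B' := by
    filter_upwards [hev] with n hn
    exact key (A n) ((m:ℝ)*μ n) (ε n) (σ n) B' (hβ n) (hε n) hn (hσ n) (hae n)
      (hint1 n) (hint2 n) (hint3 n) (hϱ n) (hroot n) (hB' n) hB'0
  -- squeeze
  have hlow : Tendsto (fun n => 1 - 72*(ε n)*B') atTop (𝓝 1) := by
    have h2 : Tendsto (fun n => 72*(ε n)*B') atTop (𝓝 0) := by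
      have := (hε0.const_mul (72:ℝ)).mul_const B'
      simpa using this
    have := (tendsto_const_nhds : Tendsto (fun _ : ℕ => (1:ℝ)) atTop (𝓝 1)).sub h2
    simpa using this
  have hup : Tendsto (fun n => (1 - ε n)⁻¹ + 48*(ε n)*B') atTop (𝓝 1) := by
    have h1 : Tendsto (fun n => (1 - ε n)⁻¹) atTop (𝓝 1) := by
      have hsub : Tendsto (fun n => 1 - ε n) atTop (𝓝 1) := by
        have := (tendsto_const_nhds : Tendsto (fun _ : ℕ => (1:ℝ)) atTop (𝓝 1)).sub hε0
        simpa using this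
      have := hsub.inv₀ (by norm_num)
      simpa using this
    have h2 : Tendsto (fun n => 48*(ε n)*B') atTop (𝓝 0) := by
      have := (hε0.const_mul (48:ℝ)).mul_const B'
      simpa using this
    have := h1.add h2
    simpa using this
  apply tendsto_of_tendsto_of_tendsto_of_le_of_le' hlow hup
  · filter_upwards [hkey] with n hn
    have hεn := hε n
    rw [le_div_iff₀ hεn]
    calc (1 - 72*(ε n)*B') * ε n = ε n - 72*(ε n)^2*B' := by ring
      _ ≤ _ := hn.1
  · filter_upwards [hkey] with n hn
    have hεn := hε n
    rw [div_le_iff₀ hεn]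
    calc 1 + (m:ℝ) * μ n *
          (-(∫ x, x * Real.exp (-(((m:ℝ) * μ n - (m:ℝ) * μ n * σ n) * x)) ∂(A n)))
        ≤ (ε n)*(1 - ε n)⁻¹ + 48*(ε n)^2*B' := hn.2
      _ = ((1 - ε n)⁻¹ + 48*(ε n)*B') * ε n := by ring
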